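/- In the structured increasing shrinkage process where γ_h = ϑ_h ρ_h, ϑ_h^{-1} ~ Gamma(a_θ, b_θ) with a_θ > 1, and ρ_h ~ Ber(1 − π_h) with π_h from stick-breaking with Beta(1, α) sticks, we have E(γ_h) = (b_θ/(a_θ − 1)) · (α/(1+α))^h; in particular E(γ_h) is strictly decreasing in h and can be written in the form a b^{h-1} with a = (b_θ/(a_θ−1)) α/(1+α) > 0 and b = α/(1+α) ∈ (0,1). -/

import Mathlib

open MeasureTheory ProbabilityTheory Real

open scoped ENNReal NNReal in

lemma gamma_inv_integral {a r : ℝ} (ha : 1 < a) (hr : 0 < r) :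
    ∫ x, x⁻¹ ∂(gammaMeasure a r) = r / (a - 1) := by
  have ha0 : 0 < a := by linarith
  have ha1 : (0:ℝ) < a - 1 := by linarith
  have h1 : gammaMeasure a r
      = volume.withDensity fun x => ((gammaPDFReal a r x).toNNReal : ℝ≥0∞) := rfl
  rw [h1, integral_withDensity_eq_integral_smul
    (measurable_gammaPDFReal a r).real_toNNReal _]
  have h2 : (fun x : ℝ => (gammaPDFReal a r x).toNNReal • x⁻¹)
      = fun x => gammaPDFReal a r x * x⁻¹ := by
    ext x
    rw [NNReal.smul_def, Real.coe_toNNReal _ (gammaPDFReal_nonneg ha0 hr x), smul_eq_mul]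
  rw [h2]
  have h3 : ∀ x : ℝ, x ∉ Set.Ioi (0:ℝ) → gammaPDFReal a r x * x⁻¹ = 0 := by
    intro x hx
    rcases eq_or_lt_of_le (Set.notMem_Ioi.mp hx) with h | h
    · simp [h]
    · simp [gammaPDFReal, not_le.mpr h]
  rw [← setIntegral_eq_integral_of_forall_compl_eq_zero h3]
  have h4 : ∀ x ∈ Set.Ioi (0:ℝ), gammaPDFReal a r x * x⁻¹
      = (r ^ a / Gamma a) * (x ^ (a - 1 - 1) * exp (-(r * x))) := by
    intro x hx
    have hx0 : (0:ℝ) < x := hx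
    rw [gammaPDFReal, if_pos hx0.le]
    rw [show a - 1 - 1 = a - 1 + (-1) by ring, Real.rpow_add hx0, Real.rpow_neg_one]
    ring
  rw [setIntegral_congr_fun measurableSet_Ioi h4, integral_const_mul,
    integral_rpow_mul_exp_neg_mul_Ioi ha1 hr]
  have hΓ : Gamma a = (a - 1) * Gamma (a - 1) := by
    have := Real.Gamma_add_one (s := a - 1) (by linarith)
    rw [sub_add_cancel] at this
    exact this
  have key : r ^ a * (1 / r) ^ (a - 1) = r := by
    rw [div_rpow zero_le_one hr.le, one_rpow, mul_one_div, ← Real.rpow_sub hr,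
      show a - (a - 1) = 1 by ring, Real.rpow_one]
  have hΓ1 : Gamma (a - 1) ≠ 0 := (Gamma_pos_of_pos ha1).ne'
  rw [hΓ]
  field_simp
  linear_combination key

/-- Column-scale means of the structured increasing shrinkage process (0-indexed: index
`h` corresponds to column `h+1` of the paper): with `γ_h = ϑ_h ρ_h`,
`ϑ_h⁻¹ ~ Gamma(a_θ, b_θ)` (so `ϑ_h` is inverse-gamma, `a_θ > 1`), `ρ_h` conditionally
Bernoulli given the i.i.d. `Beta(1,α)` sticks with success probability
`∏_{m=1}^{h+1} (1 - v_m)`, and `ϑ_h ⟂ ρ_h`, one has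
`E(γ_h) = (b_θ/(a_θ-1)) (α/(1+α))^{h+1}`; in particular `E(γ_h)` is strictly decreasing
and of the form `a b^h` with `a = (b_θ/(a_θ-1)) α/(1+α)` and `b = α/(1+α) ∈ (0,1)`. -/
theorem sis_column_scale_mean
    {Ω : Type*} [MeasurableSpace Ω] (μ : Measure Ω) [IsProbabilityMeasure μ]
    (α aθ bθ : ℝ) (hα : 0 < α) (haθ : 1 < aθ) (hbθ : 0 < bθ)
    (θh ρ v : ℕ → Ω → ℝ)
    (hθmeas : ∀ h, Measurable (θh h)) (hρmeas : ∀ h, Measurable (ρ h))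
    (hvmeas : ∀ m, Measurable (v m))
    (hθpos : ∀ h, ∀ᵐ ω ∂μ, 0 < θh h ω)
    (hlaw : ∀ h, Measure.map (fun ω => (θh h ω)⁻¹) μ = gammaMeasure aθ bθ)
    (hmem : ∀ m, ∀ᵐ ω ∂μ, v m ω ∈ Set.Ioo (0 : ℝ) 1)
    (hvmean : ∀ m, ∫ ω, (1 - v m ω) ∂μ = α / (1 + α))
    (hvindep : iIndepFun v μ)
    (hber : ∀ h, ∀ᵐ ω ∂μ, ρ h ω = 0 ∨ ρ h ω = 1)
    (hcond : ∀ h,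
      μ[ρ h | MeasurableSpace.comap (fun ω (m : ℕ) => v m ω) inferInstance]
        =ᵐ[μ] fun ω => ∏ m ∈ Finset.range (h + 1), (1 - v m ω))
    (hρθindep : ∀ h, IndepFun (θh h) (ρ h) μ) :
    (∀ h : ℕ, ∫ ω, θh h ω * ρ h ω ∂μ = bθ / (aθ - 1) * (α / (1 + α)) ^ (h + 1)) ∧
      (∀ h : ℕ, ∫ ω, θh (h + 1) ω * ρ (h + 1) ω ∂μ < ∫ ω, θh h ω * ρ h ω ∂μ) ∧
      (∀ h : ℕ, ∫ ω, θh h ω * ρ h ω ∂μ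
          = (bθ / (aθ - 1) * (α / (1 + α))) * (α / (1 + α)) ^ h) := by
  
  classical
  set r : ℝ := α / (1 + α) with hrdef
  have h1α : (0:ℝ) < 1 + α := by linarith
  have hr0 : 0 < r := div_pos hα h1α
  have hr1 : r < 1 := (div_lt_one h1α).mpr (by linarith)
  have hc0 : 0 < bθ / (aθ - 1) := div_pos hbθ (by linarith)
  -- mean of θh
  have hθint : ∀ h, ∫ ω, θh h ω ∂μ = bθ / (aθ - 1) := by
    intro h
    have hinv : Measurable fun ω => (θh h ω)⁻¹ := (hθmeas h).inv
    have hmap : ∫ ω, ((θh h ω)⁻¹)⁻¹ ∂μ = ∫ x, x⁻¹ ∂(gammaMeasure aθ bθ) := by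
      rw [← hlaw h, integral_map hinv.aemeasurable
        measurable_inv.aestronglyMeasurable]
    have hae : (fun ω => ((θh h ω)⁻¹)⁻¹) =ᵐ[μ] θh h := by
      filter_upwards [hθpos h] with ω hω using inv_inv _
    rw [← integral_congr_ae hae, hmap, gamma_inv_integral haθ hbθ]
  -- mean of ρ
  have hm_le : MeasurableSpace.comap (fun ω (m : ℕ) => v m ω) inferInstance
      ≤ (inferInstance : MeasurableSpace Ω) :=
    (measurable_pi_lambda _ hvmeas).comap_le
  have hρint : ∀ h, Integrable (ρ h) μ := by
    intro h
    refine (integrable_const (1:ℝ)).mono' (hρmeas h).aestronglyMeasurable ?_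
    filter_upwards [hber h] with ω hω
    rcases hω with h0 | h0 <;> simp [h0]
  set w : ℕ → Ω → ℝ := fun m ω => 1 - v m ω with hwdef
  have hwmeas : ∀ m, Measurable (w m) := fun m => measurable_const.sub (hvmeas m)
  have hwindep : iIndepFun w μ :=
    hvindep.comp (fun _ x => 1 - x) (fun _ => measurable_const.sub measurable_id)
  have hprod : ∀ n, ∫ ω, ∏ m ∈ Finset.range n, (1 - v m ω) ∂μ = r ^ n := by
    intro n
    induction n with
    | zero => simp
    | succ n ih =>
      have hind : IndepFun (∏ j ∈ Finset.range n, w j) (w n) μ :=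
        hwindep.indepFun_prod_range_succ hwmeas n
      have hpm : Measurable (∏ j ∈ Finset.range n, w j) := by
        rw [Finset.prod_fn]
        exact Finset.measurable_prod _ (fun i _ => hwmeas i)
      have hmul := hind.integral_mul_eq_mul_integral hpm.aestronglyMeasurable
        (hwmeas n).aestronglyMeasurable
      simp only [Finset.prod_fn, hwdef] at hmul
      calc ∫ ω, ∏ m ∈ Finset.range (n + 1), (1 - v m ω) ∂μ
          = ∫ ω, (∏ m ∈ Finset.range n, (1 - v m ω)) * (1 - v n ω) ∂μ := by
            simp_rw [Finset.prod_range_succ]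
        _ = (∫ ω, ∏ m ∈ Finset.range n, (1 - v m ω) ∂μ) * ∫ ω, (1 - v n ω) ∂μ := hmul
        _ = r ^ n * r := by rw [ih, hvmean n]
        _ = r ^ (n + 1) := (pow_succ r n).symm
  have hρmean : ∀ h, ∫ ω, ρ h ω ∂μ = r ^ (h + 1) := by
    intro h
    haveI : SigmaFinite (μ.trim hm_le) := inferInstance
    rw [← integral_condExp hm_le (f := ρ h), integral_congr_ae (hcond h), hprod]
  have key : ∀ h : ℕ, ∫ ω, θh h ω * ρ h ω ∂μ = bθ / (aθ - 1) * r ^ (h + 1) := by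
    intro h
    rw [show ∫ ω, θh h ω * ρ h ω ∂μ = ∫ ω, (θh h * ρ h) ω ∂μ from rfl,
      (hρθindep h).integral_mul_eq_mul_integral (hθmeas h).aestronglyMeasurable
      (hρmeas h).aestronglyMeasurable, hθint h, hρmean h]
  refine ⟨key, fun h => ?_, fun h => ?_⟩
  · rw [key h, key (h + 1)]
    exact mul_lt_mul_of_pos_left
      (pow_lt_pow_right_of_lt_one₀ hr0 hr1 (by omega)) hc0
  · rw [key h, pow_succ, mul_comm (r ^ h) r]
    ring
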